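/- (Deterministic Frobenius bound from Theorem 6.) Under the hypotheses of the previous statement, (1/p)‖Ω̂ − Ω₀‖_F² ≤ 4‖Ω₀‖_{L₁} · C₄ · s₀ λ^{2−q}, where C₄ = 2(1 + 2^{1−q} + 3^{1−q})(4‖Ω₀‖_{L₁})^{1−q}. -/

import Mathlib

open scoped BigOperators

/-- Elementwise sup norm of a real matrix. -/
noncomputable def elemSupNorm {p q : ℕ} (A : Matrix (Fin p) (Fin q) ℝ) : ℝ :=
  ⨆ i, ⨆ j, |A i j|

/-- Matrix ℓ₁ norm: maximum absolute column sum. -/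
noncomputable def matL1Norm {p q : ℕ} (A : Matrix (Fin p) (Fin q) ℝ) : ℝ :=
  ⨆ j, ∑ i, |A i j|

lemma clime_keylem {θ x q : ℝ} (hθ : 0 ≤ θ) (hx : 0 ≤ x) (hxθ : x ≤ θ) (hq1 : q < 1) :
    x ≤ θ ^ (1 - q) * x ^ q := by
  rcases eq_or_lt_of_le hx with h0 | hxpos
  · rw [← h0]
    exact mul_nonneg (Real.rpow_nonneg hθ _) (Real.rpow_nonneg le_rfl _)
  · have hxx : x = x ^ (1 - q) * x ^ q := by rw [← Real.rpow_add hxpos]; norm_num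
    have h1q : (0:ℝ) ≤ 1 - q := by linarith
    calc x = x ^ (1 - q) * x ^ q := hxx
    _ ≤ θ ^ (1 - q) * x ^ q := mul_le_mul_of_nonneg_right
      (Real.rpow_le_rpow hx hxθ h1q) (Real.rpow_nonneg hx _)

/-- Deterministic core of Theorem 6 (Frobenius norm bound) for the CLIME estimator. -/
theorem clime_frobenius_bound {p : ℕ} (hp : 0 < p)
    (Om₀ S₀ Sn Omhat1 Omhat : Matrix (Fin p) (Fin p) ℝ)
    (q s₀ lam : ℝ) (hq0 : 0 ≤ q) (hq1 : q < 1) (hs₀ : 0 ≤ s₀)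
    (hΩsym : Om₀.IsSymm) (hΩpd : Om₀.PosDef)
    (hS : S₀ = Om₀⁻¹)
    (hsparse : ∀ i, ∑ j, |Om₀ i j| ^ q ≤ s₀)
    -- feasibility of Ω̂₁
    (hfeas : ∀ i j, |(Sn * Omhat1 - 1) i j| ≤ lam)
    -- column-wise ℓ₁-minimality of Ω̂₁
    (hmin : ∀ i : Fin p, ∀ β : Fin p → ℝ,
      (∀ k, |Sn.mulVec β k - (if k = i then (1 : ℝ) else 0)| ≤ lam) →
        ∑ j, |Omhat1 j i| ≤ ∑ j, |β j|)
    -- CLIME symmetrization: Ω̂ is symmetric and each entry is the smaller-magnitude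
    -- one among the (i,j) and (j,i) entries of Ω̂₁
    (hsym : Omhat.IsSymm)
    (hpick : ∀ i j, Omhat i j = Omhat1 i j ∨ Omhat i j = Omhat1 j i)
    (hmag : ∀ i j, |Omhat i j| ≤ |Omhat1 i j|)
    -- tuning parameter condition
    (hlam : matL1Norm Om₀ * elemSupNorm (Sn - S₀) ≤ lam) :
    (1 / (p : ℝ)) * ∑ i, ∑ j, ((Omhat - Om₀) i j) ^ 2 ≤
      4 * matL1Norm Om₀ *
        (2 * (1 + 2 ^ (1 - q) + 3 ^ (1 - q)) * (4 * matL1Norm Om₀) ^ (1 - q)) *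
        s₀ * lam ^ (2 - q) := by
  haveI : Nonempty (Fin p) := ⟨⟨0, hp⟩⟩
  set M := matL1Norm Om₀ with hMdef
  set e := elemSupNorm (Sn - S₀) with hedef
  have hsymm : ∀ i j, Om₀ j i = Om₀ i j := fun i j => hΩsym.apply i j
  have hcolM : ∀ j, ∑ i, |Om₀ i j| ≤ M := by
    intro j
    rw [hMdef]
    exact le_ciSup (f := fun j => ∑ i, |Om₀ i j|) (Set.finite_range _).bddAbove j
  have hMpos : 0 < M := by
    have hdiag : 0 < Om₀ ⟨0, hp⟩ ⟨0, hp⟩ := by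
      have hne : (Pi.single (⟨0, hp⟩ : Fin p) 1 : Fin p → ℝ) ≠ 0 := by
        intro h
        have := congrFun h ⟨0, hp⟩
        simp at this
      exact hΩpd.diag_pos
    calc (0:ℝ) < |Om₀ ⟨0, hp⟩ ⟨0, hp⟩| := abs_pos.mpr hdiag.ne'
    _ ≤ ∑ i, |Om₀ i ⟨0, hp⟩| :=
        Finset.single_le_sum (f := fun i => |Om₀ i ⟨0, hp⟩|)
          (fun i _ => abs_nonneg _) (Finset.mem_univ _)
    _ ≤ M := hcolM _
  have hesup : ∀ i j, |(Sn - S₀) i j| ≤ e := by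
    intro i j
    calc |(Sn - S₀) i j| ≤ ⨆ j', |(Sn - S₀) i j'| :=
          le_ciSup (f := fun j' => |(Sn - S₀) i j'|) (Set.finite_range _).bddAbove j
    _ ≤ e := by
          rw [hedef]
          exact le_ciSup (f := fun i' => ⨆ j', |(Sn - S₀) i' j'|)
            (Set.finite_range _).bddAbove i
  have he0 : 0 ≤ e := (abs_nonneg _).trans (hesup ⟨0, hp⟩ ⟨0, hp⟩)
  have hlam0 : 0 ≤ lam := (abs_nonneg _).trans (hfeas ⟨0, hp⟩ ⟨0, hp⟩)
  have hdet : IsUnit Om₀.det := hΩpd.det_pos.ne'.isUnit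
  have hOmInv : S₀ * Om₀ = 1 := by rw [hS]; exact Matrix.nonsing_inv_mul _ hdet
  have hInvOm : Om₀ * S₀ = 1 := by rw [hS]; exact Matrix.mul_nonsing_inv _ hdet
  -- Step (a): the true column is feasible, hence ℓ₁-minimality gives column bounds
  have colfeas : ∀ i k,
      |Sn.mulVec (fun j => Om₀ j i) k - (if k = i then (1:ℝ) else 0)| ≤ lam := by
    intro i k
    have h2 : ∑ j, S₀ k j * Om₀ j i = (if k = i then (1:ℝ) else 0) := by
      have := congrFun (congrFun hOmInv k) i
      simpa [Matrix.mul_apply, Matrix.one_apply] using this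
    have h1 : Sn.mulVec (fun j => Om₀ j i) k - (if k = i then (1:ℝ) else 0)
        = ∑ j, (Sn - S₀) k j * Om₀ j i := by
      simp only [Matrix.mulVec, dotProduct, Matrix.sub_apply, sub_mul,
        Finset.sum_sub_distrib, h2]
    rw [h1]
    calc |∑ j, (Sn - S₀) k j * Om₀ j i| ≤ ∑ j, |(Sn - S₀) k j * Om₀ j i| :=
          Finset.abs_sum_le_sum_abs _ _
    _ ≤ ∑ j, e * |Om₀ j i| := Finset.sum_le_sum fun j _ => by
          rw [abs_mul]; exact mul_le_mul_of_nonneg_right (hesup k j) (abs_nonneg _)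
    _ = e * ∑ j, |Om₀ j i| := (Finset.mul_sum _ _ _).symm
    _ ≤ e * M := mul_le_mul_of_nonneg_left (hcolM i) he0
    _ ≤ lam := by rw [mul_comm]; exact hlam
  have colsum1 : ∀ i, ∑ j, |Omhat1 j i| ≤ M := fun i =>
    (hmin i _ (colfeas i)).trans (hcolM i)
  -- Step (b): entrywise bound on Omhat1 - Om₀
  set θ := 2 * M * lam with hθdef
  have hθ0 : 0 ≤ θ := by positivity
  have hb : ∀ k i, |Omhat1 k i - Om₀ k i| ≤ θ := by
    intro k i
    have mkey : Om₀ * ((Sn * Omhat1 - 1) - (Sn - S₀) * Omhat1) = Omhat1 - Om₀ := by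
      have h3 : (Sn * Omhat1 - 1) - (Sn - S₀) * Omhat1 = S₀ * Omhat1 - 1 := by
        noncomm_ring
      rw [h3, Matrix.mul_sub, ← Matrix.mul_assoc, hInvOm, Matrix.one_mul, Matrix.mul_one]
    have key : Omhat1 k i - Om₀ k i
        = ∑ m, Om₀ k m * ((Sn * Omhat1 - 1) m i - ((Sn - S₀) * Omhat1) m i) := by
      have := congrFun (congrFun mkey k) i
      simpa [Matrix.mul_apply, Matrix.sub_apply] using this.symm
    have hD : ∀ m, |(Sn * Omhat1 - 1) m i - ((Sn - S₀) * Omhat1) m i| ≤ 2 * lam := by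
      intro m
      have h4 : |((Sn - S₀) * Omhat1) m i| ≤ lam := by
        calc |((Sn - S₀) * Omhat1) m i| = |∑ j, (Sn - S₀) m j * Omhat1 j i| := by
              rw [Matrix.mul_apply]
        _ ≤ ∑ j, |(Sn - S₀) m j * Omhat1 j i| := Finset.abs_sum_le_sum_abs _ _
        _ ≤ ∑ j, e * |Omhat1 j i| := Finset.sum_le_sum fun j _ => by
              rw [abs_mul]; exact mul_le_mul_of_nonneg_right (hesup m j) (abs_nonneg _)
        _ = e * ∑ j, |Omhat1 j i| := (Finset.mul_sum _ _ _).symm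
        _ ≤ e * M := mul_le_mul_of_nonneg_left (colsum1 i) he0
        _ ≤ lam := by rw [mul_comm]; exact hlam
      calc |(Sn * Omhat1 - 1) m i - ((Sn - S₀) * Omhat1) m i|
          ≤ |(Sn * Omhat1 - 1) m i| + |((Sn - S₀) * Omhat1) m i| := abs_sub _ _
      _ ≤ lam + lam := add_le_add (hfeas m i) h4
      _ = 2 * lam := by ring
    calc |Omhat1 k i - Om₀ k i|
        = |∑ m, Om₀ k m * ((Sn * Omhat1 - 1) m i - ((Sn - S₀) * Omhat1) m i)| := by rw [key]
    _ ≤ ∑ m, |Om₀ k m * ((Sn * Omhat1 - 1) m i - ((Sn - S₀) * Omhat1) m i)| :=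
          Finset.abs_sum_le_sum_abs _ _
    _ ≤ ∑ m, |Om₀ k m| * (2 * lam) := Finset.sum_le_sum fun m _ => by
          rw [abs_mul]; exact mul_le_mul_of_nonneg_left (hD m) (abs_nonneg _)
    _ = (∑ m, |Om₀ k m|) * (2 * lam) := by rw [← Finset.sum_mul]
    _ = (∑ m, |Om₀ m k|) * (2 * lam) := by
          congr 1; exact Finset.sum_congr rfl fun m _ => by rw [hsymm]
    _ ≤ M * (2 * lam) := mul_le_mul_of_nonneg_right (hcolM k) (by positivity)
    _ = θ := by rw [hθdef]; ring
  -- Step (c): entrywise bound on Omhat - Om₀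
  have hc : ∀ k i, |Omhat k i - Om₀ k i| ≤ θ := by
    intro k i
    rcases hpick k i with h | h
    · rw [h]; exact hb k i
    · rw [h, hsymm]; exact hb i k
  -- degenerate case lam = 0
  rcases eq_or_lt_of_le hlam0 with h0 | hlampos
  · have hz : ∀ i j, (Omhat - Om₀) i j = 0 := by
      intro i j
      have h := hc i j
      rw [hθdef, ← h0, mul_zero] at h
      have h' : Omhat i j - Om₀ i j = 0 := abs_eq_zero.mp (le_antisymm h (abs_nonneg _))
      simpa [Matrix.sub_apply] using h'
    have hrpow : lam ^ (2 - q) = 0 := by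
      rw [← h0]; exact Real.zero_rpow (by linarith)
    simp [hz, hrpow]
  -- main case lam > 0
  have hθpos : 0 < θ := by rw [hθdef]; positivity
  have hθq : θ ^ (1 - q) * θ ^ q = θ := by rw [← Real.rpow_add hθpos]; norm_num
  have hsparse_col : ∀ i, ∑ j, |Om₀ j i| ^ q ≤ s₀ := by
    intro i
    calc ∑ j, |Om₀ j i| ^ q = ∑ j, |Om₀ i j| ^ q :=
          Finset.sum_congr rfl fun j _ => by rw [hsymm]
    _ ≤ s₀ := hsparse i
  -- Step (d): column ℓ₁ bound for Omhat - Om₀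
  have colbound : ∀ i, ∑ j, |Omhat j i - Om₀ j i| ≤ 4 * (θ ^ (1 - q) * s₀) := by
    intro i
    set A := Finset.univ.filter (fun j => θ < |Om₀ j i|) with hAdef
    set B := Finset.univ.filter (fun j => ¬ θ < |Om₀ j i|) with hBdef
    have hsplit : ∀ f : Fin p → ℝ, ∑ j ∈ A, f j + ∑ j ∈ B, f j = ∑ j, f j := fun f =>
      Finset.sum_filter_add_sum_filter_not _ _ _
    have hA_card : (A.card : ℝ) * θ ^ q ≤ s₀ := by
      calc (A.card : ℝ) * θ ^ q = ∑ _j ∈ A, θ ^ q := by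
            rw [Finset.sum_const, nsmul_eq_mul]
      _ ≤ ∑ j ∈ A, |Om₀ j i| ^ q := Finset.sum_le_sum fun j hj =>
            Real.rpow_le_rpow hθ0 (le_of_lt (Finset.mem_filter.mp hj).2) hq0
      _ ≤ ∑ j, |Om₀ j i| ^ q := Finset.sum_le_sum_of_subset_of_nonneg
            (Finset.filter_subset _ _) (fun j _ _ => Real.rpow_nonneg (abs_nonneg _) q)
      _ ≤ s₀ := hsparse_col i
    have hAcard' : θ * (A.card : ℝ) ≤ θ ^ (1 - q) * s₀ := by
      calc θ * (A.card : ℝ) = θ ^ (1 - q) * θ ^ q * (A.card : ℝ) := by rw [hθq]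
      _ = θ ^ (1 - q) * ((A.card : ℝ) * θ ^ q) := by ring
      _ ≤ θ ^ (1 - q) * s₀ :=
            mul_le_mul_of_nonneg_left hA_card (Real.rpow_nonneg hθ0 _)
    have SA : ∑ j ∈ A, |Omhat j i - Om₀ j i| ≤ θ ^ (1 - q) * s₀ := by
      calc ∑ j ∈ A, |Omhat j i - Om₀ j i| ≤ ∑ _j ∈ A, θ :=
            Finset.sum_le_sum fun j _ => hc j i
      _ = θ * (A.card : ℝ) := by rw [Finset.sum_const, nsmul_eq_mul, mul_comm]
      _ ≤ θ ^ (1 - q) * s₀ := hAcard'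
    have SB0 : ∑ j ∈ B, |Om₀ j i| ≤ θ ^ (1 - q) * s₀ := by
      calc ∑ j ∈ B, |Om₀ j i| ≤ ∑ j ∈ B, θ ^ (1 - q) * |Om₀ j i| ^ q :=
            Finset.sum_le_sum fun j hj =>
              clime_keylem hθ0 (abs_nonneg _) (not_lt.mp (Finset.mem_filter.mp hj).2) hq1
      _ = θ ^ (1 - q) * ∑ j ∈ B, |Om₀ j i| ^ q := (Finset.mul_sum _ _ _).symm
      _ ≤ θ ^ (1 - q) * s₀ := by
            refine mul_le_mul_of_nonneg_left ?_ (Real.rpow_nonneg hθ0 _)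
            calc ∑ j ∈ B, |Om₀ j i| ^ q ≤ ∑ j, |Om₀ j i| ^ q :=
                  Finset.sum_le_sum_of_subset_of_nonneg (Finset.filter_subset _ _)
                    (fun j _ _ => Real.rpow_nonneg (abs_nonneg _) q)
            _ ≤ s₀ := hsparse_col i
    have SAdiff : ∑ j ∈ A, (|Om₀ j i| - |Omhat1 j i|) ≤ θ ^ (1 - q) * s₀ := by
      calc ∑ j ∈ A, (|Om₀ j i| - |Omhat1 j i|) ≤ ∑ _j ∈ A, θ :=
            Finset.sum_le_sum fun j _ => by
              calc |Om₀ j i| - |Omhat1 j i| ≤ |Om₀ j i - Omhat1 j i| :=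
                    abs_sub_abs_le_abs_sub _ _
              _ = |Omhat1 j i - Om₀ j i| := abs_sub_comm _ _
              _ ≤ θ := hb j i
      _ = θ * (A.card : ℝ) := by rw [Finset.sum_const, nsmul_eq_mul, mul_comm]
      _ ≤ θ ^ (1 - q) * s₀ := hAcard'
    have SB1 : ∑ j ∈ B, |Omhat1 j i| ≤ 2 * (θ ^ (1 - q) * s₀) := by
      have h5 : ∑ j ∈ A, |Omhat1 j i| + ∑ j ∈ B, |Omhat1 j i| ≤
          ∑ j ∈ A, |Om₀ j i| + ∑ j ∈ B, |Om₀ j i| := by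
        rw [hsplit, hsplit]
        exact hmin i _ (colfeas i)
      have h6 : ∑ j ∈ A, |Om₀ j i| - ∑ j ∈ A, |Omhat1 j i| ≤ θ ^ (1 - q) * s₀ := by
        rw [← Finset.sum_sub_distrib]; exact SAdiff
      linarith [SB0]
    have SB : ∑ j ∈ B, |Omhat j i - Om₀ j i| ≤ 3 * (θ ^ (1 - q) * s₀) := by
      calc ∑ j ∈ B, |Omhat j i - Om₀ j i| ≤ ∑ j ∈ B, (|Omhat1 j i| + |Om₀ j i|) :=
            Finset.sum_le_sum fun j _ =>
              (abs_sub _ _).trans (add_le_add_left (hmag j i) _)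
      _ = ∑ j ∈ B, |Omhat1 j i| + ∑ j ∈ B, |Om₀ j i| := Finset.sum_add_distrib
      _ ≤ 2 * (θ ^ (1 - q) * s₀) + θ ^ (1 - q) * s₀ := add_le_add SB1 SB0
      _ = 3 * (θ ^ (1 - q) * s₀) := by ring
    have := hsplit (fun j => |Omhat j i - Om₀ j i|)
    linarith [SA, SB]
  -- Step (e): Frobenius bound
  have hsq : ∀ i j, ((Omhat - Om₀) i j) ^ 2 ≤ θ * |Omhat j i - Om₀ j i| := by
    intro i j
    have hflip : |Omhat i j - Om₀ i j| = |Omhat j i - Om₀ j i| := by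
      rw [← hsym.apply i j, ← hΩsym.apply i j]
    calc ((Omhat - Om₀) i j) ^ 2 = |Omhat i j - Om₀ i j| ^ 2 := by
          rw [Matrix.sub_apply, sq_abs]
    _ = |Omhat i j - Om₀ i j| * |Omhat i j - Om₀ i j| := sq _
    _ ≤ θ * |Omhat i j - Om₀ i j| :=
          mul_le_mul_of_nonneg_right (hflip ▸ (hflip.symm ▸ hc i j)) (abs_nonneg _)
    _ = θ * |Omhat j i - Om₀ j i| := by rw [hflip]
  have sumbound : ∑ i, ∑ j, ((Omhat - Om₀) i j) ^ 2 ≤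
      (p : ℝ) * (θ * (4 * (θ ^ (1 - q) * s₀))) := by
    calc ∑ i, ∑ j, ((Omhat - Om₀) i j) ^ 2
        ≤ ∑ i : Fin p, ∑ j, θ * |Omhat j i - Om₀ j i| :=
          Finset.sum_le_sum fun i _ => Finset.sum_le_sum fun j _ => hsq i j
    _ = ∑ i : Fin p, θ * ∑ j, |Omhat j i - Om₀ j i| :=
          Finset.sum_congr rfl fun i _ => (Finset.mul_sum _ _ _).symm
    _ ≤ ∑ _i : Fin p, θ * (4 * (θ ^ (1 - q) * s₀)) :=
          Finset.sum_le_sum fun i _ => mul_le_mul_of_nonneg_left (colbound i) hθ0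
    _ = (p : ℝ) * (θ * (4 * (θ ^ (1 - q) * s₀))) := by
          rw [Finset.sum_const, nsmul_eq_mul, Finset.card_univ, Fintype.card_fin]
  have hppos : (0:ℝ) < p := Nat.cast_pos.mpr hp
  have lhs_le : (1 / (p : ℝ)) * ∑ i, ∑ j, ((Omhat - Om₀) i j) ^ 2 ≤
      4 * (θ ^ (2 - q) * s₀) := by
    have h7 : θ * θ ^ (1 - q) = θ ^ (2 - q) := by
      rw [show (2:ℝ) - q = 1 + (1 - q) by ring, Real.rpow_add hθpos, Real.rpow_one]
    calc (1 / (p : ℝ)) * ∑ i, ∑ j, ((Omhat - Om₀) i j) ^ 2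
        ≤ (1 / (p : ℝ)) * ((p : ℝ) * (θ * (4 * (θ ^ (1 - q) * s₀)))) :=
          mul_le_mul_of_nonneg_left sumbound (by positivity)
    _ = θ * θ ^ (1 - q) * (4 * s₀) := by field_simp
    _ = 4 * (θ ^ (2 - q) * s₀) := by rw [h7]; ring
  refine lhs_le.trans ?_
  -- final arithmetic
  have hKle : (3:ℝ) ≤ 1 + 2 ^ (1 - q) + 3 ^ (1 - q) := by
    have h8 : (1:ℝ) ≤ 2 ^ (1 - q) := Real.one_le_rpow one_le_two (by linarith)
    have h9 : (1:ℝ) ≤ 3 ^ (1 - q) := Real.one_le_rpow (by norm_num) (by linarith)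
    linarith
  have hθrw : θ ^ (2 - q) = (2 * M) ^ (2 - q) * lam ^ (2 - q) := by
    rw [hθdef, Real.mul_rpow (by positivity) hlam0]
  have h2M : (2 * M) ^ (2 - q) ≤ 2 * M * (4 * M) ^ (1 - q) := by
    calc (2 * M) ^ (2 - q) = (2 * M) * (2 * M) ^ (1 - q) := by
          rw [show (2:ℝ) - q = 1 + (1 - q) by ring,
            Real.rpow_add (by positivity), Real.rpow_one]
    _ ≤ 2 * M * (4 * M) ^ (1 - q) :=
          mul_le_mul_of_nonneg_left
            (Real.rpow_le_rpow (by positivity) (by linarith) (by linarith)) (by positivity)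
  have hfin : 4 * (θ ^ (2 - q) * s₀) ≤
      8 * M * (4 * M) ^ (1 - q) * s₀ * lam ^ (2 - q) := by
    rw [hθrw]
    have := mul_le_mul_of_nonneg_right h2M
      (mul_nonneg (Real.rpow_nonneg hlam0 _) hs₀ : 0 ≤ lam ^ (2 - q) * s₀)
    nlinarith [this]
  refine hfin.trans ?_
  have hX : (0:ℝ) ≤ M * (4 * M) ^ (1 - q) * s₀ * lam ^ (2 - q) := by
    have := Real.rpow_nonneg (by positivity : (0:ℝ) ≤ 4 * M) (1 - q)
    have := Real.rpow_nonneg hlam0 (2 - q)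
    positivity
  nlinarith [hX, hKle, mul_le_mul_of_nonneg_right (by linarith : (3:ℝ) ≤ 1 + 2 ^ (1-q) + 3 ^ (1-q)) hX]
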